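/- Let M and M′ be modeled as follows: X ∈ GL_{d}(ℂ) and Y ∈ GL_{d′}(ℂ) are period matrices, d even, d′ odd, with d⁺(M) = d⁻(M) = d/2 and d⁺(M′) = d⁻(M′) + ε for a sign ε. Suppose h⁺ and h⁻ are polynomial functions in (x,y) that factor as h^{±}(x,y) = φ^{±}(x)ψ^{±}(y), where for fixed y each h^{±}(·,y) has admissibility type {(a^{±}_μ), (d^{±}(M′), d^{∓}(M′))} and the exponent sequences satisfy a⁺_μ = a⁻_μ for all μ. If ε = 1, then the polynomials φ⁺(x)·f⁻(x) and φ⁻(x)·f⁺(x) have the same admissibility type, where f^{±} are the upper-left/upper-right d/2 × d/2 minors; consequently (by uniqueness of polynomials of a given admissibility type) φ⁺ f⁻ = c · φ⁻ f⁺ for some nonzero rational constant c. -/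

import Mathlib

open Matrix Finset

/-- Evaluation of a polynomial function on d×d matrices. -/
noncomputable def matEval {F : Type*} [CommSemiring F] {n : ℕ}
    (f : MvPolynomial (Fin n × Fin n) F) (M : Matrix (Fin n) (Fin n) F) : F :=
  MvPolynomial.eval (fun q => M q.1 q.2) f

/-- The block-diagonal embedding diag(a,b) of GL(d⁺) × GL(d⁻). -/
def blockDiagEmb {F : Type*} [Semiring F] {dp dm : ℕ}
    (a : Matrix (Fin dp) (Fin dp) F) (b : Matrix (Fin dm) (Fin dm) F) :
    Matrix (Fin (dp + dm)) (Fin (dp + dm)) F :=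
  (Matrix.fromBlocks a 0 0 b).submatrix finSumFinEquiv.symm finSumFinEquiv.symm

/-- Admissibility type {(a₁,…,a_m),(k⁺,k⁻)} of a polynomial on M_d(F). -/
def IsAdmissibleType {F : Type*} [Field F] {m dp dm : ℕ}
    (β : Fin (dp + dm) → Fin m)
    (f : MvPolynomial (Fin (dp + dm) × Fin (dp + dm)) F)
    (a : Fin m → ℤ) (kP kM : ℤ) : Prop :=
  ∀ p : Matrix (Fin (dp + dm)) (Fin (dp + dm)) F, IsUnit p.det →
    (∀ i j, β i < β j → p i j = 0) →
    ∀ x : Matrix (Fin (dp + dm)) (Fin (dp + dm)) F,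
      ∀ A : Matrix (Fin dp) (Fin dp) F, IsUnit A.det →
        ∀ B : Matrix (Fin dm) (Fin dm) F, IsUnit B.det →
          matEval f (p * x * blockDiagEmb A B) =
            (∏ μ : Fin m, (p.toSquareBlock β μ).det ^ a μ) *
              matEval f x * A.det ^ kP * B.det ^ kM

/-- The upper-left d⁺ × d⁺ minor, as a polynomial in the matrix entries. -/
noncomputable def fPlusPoly (F : Type*) [CommRing F] (dp dm : ℕ) :
    MvPolynomial (Fin (dp + dm) × Fin (dp + dm)) F :=
  (Matrix.of fun i j : Fin dp =>
    MvPolynomial.X (Fin.castAdd dm i, Fin.castAdd dm j)).det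

/-- The upper-right d⁻ × d⁻ minor, as a polynomial in the matrix entries. -/
noncomputable def fMinusPoly (F : Type*) [CommRing F] (dp dm : ℕ) :
    MvPolynomial (Fin (dp + dm) × Fin (dp + dm)) F :=
  (Matrix.of fun i j : Fin dm =>
    MvPolynomial.X (Fin.castLE (Nat.le_add_left dm dp) i, Fin.natAdd dp j)).det

namespace PhiAux

variable {R : Type*} [CommRing R] {n : ℕ}

def topL (M : Matrix (Fin (n+n)) (Fin (n+n)) R) : Matrix (Fin n) (Fin n) R :=
  M.submatrix (Fin.castAdd n) (Fin.castAdd n)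
def topR (M : Matrix (Fin (n+n)) (Fin (n+n)) R) : Matrix (Fin n) (Fin n) R :=
  M.submatrix (Fin.castAdd n) (Fin.natAdd n)
def botL (M : Matrix (Fin (n+n)) (Fin (n+n)) R) : Matrix (Fin n) (Fin n) R :=
  M.submatrix (Fin.natAdd n) (Fin.castAdd n)
def botR (M : Matrix (Fin (n+n)) (Fin (n+n)) R) : Matrix (Fin n) (Fin n) R :=
  M.submatrix (Fin.natAdd n) (Fin.natAdd n)
def emb (M : Matrix (Fin n ⊕ Fin n) (Fin n ⊕ Fin n) R) : Matrix (Fin (n+n)) (Fin (n+n)) R :=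
  M.submatrix finSumFinEquiv.symm finSumFinEquiv.symm

lemma emb_mul (M N : Matrix (Fin n ⊕ Fin n) (Fin n ⊕ Fin n) R) :
    emb M * emb N = emb (M * N) :=
  Matrix.submatrix_mul_equiv M N _ _ _

lemma blockDiagEmb_eq (A B : Matrix (Fin n) (Fin n) R) :
    blockDiagEmb A B = emb (fromBlocks A 0 0 B) := rfl

set_option linter.unusedSectionVars false

@[simp] lemma emb_apply' (M : Matrix (Fin n ⊕ Fin n) (Fin n ⊕ Fin n) R) (k l : Fin n ⊕ Fin n) :
    emb M (finSumFinEquiv k) (finSumFinEquiv l) = M k l := by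
  simp [emb]

@[simp] lemma emb_apply_ll (M : Matrix (Fin n ⊕ Fin n) (Fin n ⊕ Fin n) R) (i j : Fin n) :
    emb M (Fin.castAdd n i) (Fin.castAdd n j) = M (Sum.inl i) (Sum.inl j) := by
  rw [← finSumFinEquiv_apply_left, ← finSumFinEquiv_apply_left, emb_apply']

@[simp] lemma emb_apply_lr (M : Matrix (Fin n ⊕ Fin n) (Fin n ⊕ Fin n) R) (i j : Fin n) :
    emb M (Fin.castAdd n i) (Fin.natAdd n j) = M (Sum.inl i) (Sum.inr j) := by
  rw [← finSumFinEquiv_apply_left, ← finSumFinEquiv_apply_right, emb_apply']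

@[simp] lemma emb_apply_rl (M : Matrix (Fin n ⊕ Fin n) (Fin n ⊕ Fin n) R) (i j : Fin n) :
    emb M (Fin.natAdd n i) (Fin.castAdd n j) = M (Sum.inr i) (Sum.inl j) := by
  rw [← finSumFinEquiv_apply_right, ← finSumFinEquiv_apply_left, emb_apply']

@[simp] lemma emb_apply_rr (M : Matrix (Fin n ⊕ Fin n) (Fin n ⊕ Fin n) R) (i j : Fin n) :
    emb M (Fin.natAdd n i) (Fin.natAdd n j) = M (Sum.inr i) (Sum.inr j) := by
  rw [← finSumFinEquiv_apply_right, ← finSumFinEquiv_apply_right, emb_apply']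

lemma emb_blocks (x : Matrix (Fin (n+n)) (Fin (n+n)) R) :
    emb (fromBlocks (topL x) (topR x) (botL x) (botR x)) = x := by
  ext i j
  obtain ⟨k, rfl⟩ := finSumFinEquiv.surjective i
  obtain ⟨l, rfl⟩ := finSumFinEquiv.surjective j
  rw [emb_apply']
  cases k <;> cases l <;>
    simp [topL, topR, botL, botR, fromBlocks, finSumFinEquiv_apply_left,
      finSumFinEquiv_apply_right]


section Eval
variable {F : Type*} [Field F] {n : ℕ}

lemma matEval_mul (f g : MvPolynomial (Fin (n+n) × Fin (n+n)) F)
    (M : Matrix (Fin (n+n)) (Fin (n+n)) F) :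
    matEval (f * g) M = matEval f M * matEval g M := map_mul _ _ _

lemma matEval_fPlus (M : Matrix (Fin (n+n)) (Fin (n+n)) F) :
    matEval (fPlusPoly F n n) M = (topL M).det := by
  unfold matEval fPlusPoly
  rw [RingHom.map_det]
  congr 1
  ext i j
  simp [topL, RingHom.mapMatrix_apply]

lemma matEval_fMinus (M : Matrix (Fin (n+n)) (Fin (n+n)) F) :
    matEval (fMinusPoly F n n) M = (topR M).det := by
  unfold matEval fMinusPoly
  rw [RingHom.map_det]
  congr 1
  ext i j
  have : Fin.castLE (Nat.le_add_left n n) i = Fin.castAdd n i := rfl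
  simp [topR, RingHom.mapMatrix_apply, this]

end Eval

section Halves

variable {m n : ℕ} {β : Fin (n + n) → Fin m}

/-- a down-closed finset of `Fin N` is an initial segment -/
lemma downclosed_mem_iff {N : ℕ} {T : Finset (Fin N)}
    (hdc : ∀ i j : Fin N, j ≤ i → i ∈ T → j ∈ T) (i : Fin N) :
    i ∈ T ↔ (i : ℕ) < T.card := by
  constructor
  · intro hi
    by_contra h
    push_neg at h
    have hsub : Finset.Iic i ⊆ T := fun j hj => hdc i j (Finset.mem_Iic.mp hj) hi
    have := Finset.card_le_card hsub
    rw [Fin.card_Iic] at this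
    omega
  · intro h
    by_contra hi
    have hsub : T ⊆ Finset.Iio i := by
      intro j hj
      rw [Finset.mem_Iio]
      by_contra hji
      exact hi (hdc j i (le_of_not_gt hji) hj)
    have := Finset.card_le_card hsub
    rw [Fin.card_Iio] at this
    omega

lemma halves (hmono : Monotone β) {s : Fin m → ℕ}
    (hcard : ∀ μ, (Finset.univ.filter fun i => β i = μ).card = s μ)
    {pp : ℕ}
    (hsum : ∑ μ ∈ Finset.univ.filter (fun μ : Fin m => (μ : ℕ) < pp), s μ = n)
    (i : Fin (n + n)) : ((β i : ℕ) < pp) ↔ (i : ℕ) < n := by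
  classical
  set T : Finset (Fin (n+n)) := Finset.univ.filter (fun i => (β i : ℕ) < pp) with hT
  have hdc : ∀ i j : Fin (n+n), j ≤ i → i ∈ T → j ∈ T := by
    intro i j hji hi
    simp only [hT, Finset.mem_filter, Finset.mem_univ, true_and] at hi ⊢
    exact lt_of_le_of_lt (Nat.le_of_lt_succ (Nat.lt_succ_of_le (hmono hji))) hi
  have hcardT : T.card = n := by
    rw [Finset.card_eq_sum_card_fiberwise
      (f := β) (t := Finset.univ.filter (fun μ : Fin m => (μ : ℕ) < pp))]
    · refine Eq.trans ?_ hsum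
      apply Finset.sum_congr rfl
      intro μ hμ
      rw [← hcard μ]
      congr 1
      ext i
      simp only [hT, Finset.mem_filter, Finset.mem_univ, true_and]
      simp only [Finset.mem_filter, Finset.mem_univ, true_and] at hμ
      constructor
      · rintro ⟨-, h⟩; exact h
      · rintro h; exact ⟨h ▸ hμ, h⟩
    · intro x hx
      simp only [hT, Finset.mem_coe, Finset.mem_filter, Finset.mem_univ, true_and] at hx ⊢
      exact hx
  have := downclosed_mem_iff hdc i
  rw [hcardT] at this
  rw [← this]
  simp [hT]

end Halves

section Tri

variable {F : Type*} [Field F] {m n : ℕ} {β : Fin (n + n) → Fin m}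

lemma tri_topR_zero (hmono : Monotone β) {s : Fin m → ℕ}
    (hcard : ∀ μ, (Finset.univ.filter fun i => β i = μ).card = s μ) {pp : ℕ}
    (hsum : ∑ μ ∈ Finset.univ.filter (fun μ : Fin m => (μ : ℕ) < pp), s μ = n)
    {p : Matrix (Fin (n+n)) (Fin (n+n)) F}
    (htri : ∀ i j, β i < β j → p i j = 0) (i j : Fin n) :
    p (Fin.castAdd n i) (Fin.natAdd n j) = 0 := by
  apply htri
  rw [Fin.lt_def]
  have h1 : ((β (Fin.castAdd n i) : ℕ)) < pp :=
    (halves hmono hcard hsum _).mpr (by simp [Fin.castAdd])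
  have h2 : ¬ ((β (Fin.natAdd n j) : ℕ)) < pp := by
    rw [halves hmono hcard hsum]
    simp [Fin.natAdd]
  omega

lemma topL_mul_left (hmono : Monotone β) {s : Fin m → ℕ}
    (hcard : ∀ μ, (Finset.univ.filter fun i => β i = μ).card = s μ) {pp : ℕ}
    (hsum : ∑ μ ∈ Finset.univ.filter (fun μ : Fin m => (μ : ℕ) < pp), s μ = n)
    {p : Matrix (Fin (n+n)) (Fin (n+n)) F}
    (htri : ∀ i j, β i < β j → p i j = 0) (M : Matrix (Fin (n+n)) (Fin (n+n)) F) :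
    topL (p * M) = topL p * topL M := by
  ext i j
  simp only [topL, Matrix.submatrix_apply, Matrix.mul_apply]
  rw [Fin.sum_univ_add]
  have : ∀ k : Fin n, p (Fin.castAdd n i) (Fin.natAdd n k) * M (Fin.natAdd n k) (Fin.castAdd n j) = 0 := by
    intro k
    rw [tri_topR_zero hmono hcard hsum htri, zero_mul]
  rw [Finset.sum_eq_zero (fun k _ => this k), add_zero]

lemma topR_mul_left (hmono : Monotone β) {s : Fin m → ℕ}
    (hcard : ∀ μ, (Finset.univ.filter fun i => β i = μ).card = s μ) {pp : ℕ}
    (hsum : ∑ μ ∈ Finset.univ.filter (fun μ : Fin m => (μ : ℕ) < pp), s μ = n)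
    {p : Matrix (Fin (n+n)) (Fin (n+n)) F}
    (htri : ∀ i j, β i < β j → p i j = 0) (M : Matrix (Fin (n+n)) (Fin (n+n)) F) :
    topR (p * M) = topL p * topR M := by
  ext i j
  simp only [topR, topL, Matrix.submatrix_apply, Matrix.mul_apply]
  rw [Fin.sum_univ_add]
  have : ∀ k : Fin n, p (Fin.castAdd n i) (Fin.natAdd n k) * M (Fin.natAdd n k) (Fin.natAdd n j) = 0 := by
    intro k
    rw [tri_topR_zero hmono hcard hsum htri, zero_mul]
  rw [Finset.sum_eq_zero (fun k _ => this k), add_zero]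

lemma topL_mul_blockDiag (M : Matrix (Fin (n+n)) (Fin (n+n)) F)
    (A B : Matrix (Fin n) (Fin n) F) :
    topL (M * blockDiagEmb A B) = topL M * A := by
  ext i j
  simp only [topL, Matrix.submatrix_apply, Matrix.mul_apply]
  rw [Fin.sum_univ_add]
  have e1 : ∀ k : Fin n, blockDiagEmb A B (Fin.castAdd n k) (Fin.castAdd n j) = A k j := by
    intro k; rw [blockDiagEmb_eq, emb_apply_ll]; rfl
  have e2 : ∀ k : Fin n, blockDiagEmb A B (Fin.natAdd n k) (Fin.castAdd n j) = 0 := by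
    intro k; rw [blockDiagEmb_eq, emb_apply_rl]; rfl
  have hz : (∑ k : Fin n, M (Fin.castAdd n i) (Fin.natAdd n k)
      * blockDiagEmb A B (Fin.natAdd n k) (Fin.castAdd n j)) = 0 :=
    Finset.sum_eq_zero (fun k _ => by rw [e2 k, mul_zero])
  rw [hz, add_zero]
  exact Finset.sum_congr rfl (fun k _ => by rw [e1 k])

lemma topR_mul_blockDiag (M : Matrix (Fin (n+n)) (Fin (n+n)) F)
    (A B : Matrix (Fin n) (Fin n) F) :
    topR (M * blockDiagEmb A B) = topR M * B := by
  ext i j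
  simp only [topR, Matrix.submatrix_apply, Matrix.mul_apply]
  rw [Fin.sum_univ_add]
  have e1 : ∀ k : Fin n, blockDiagEmb A B (Fin.castAdd n k) (Fin.natAdd n j) = 0 := by
    intro k; rw [blockDiagEmb_eq, emb_apply_lr]; rfl
  have e2 : ∀ k : Fin n, blockDiagEmb A B (Fin.natAdd n k) (Fin.natAdd n j) = B k j := by
    intro k; rw [blockDiagEmb_eq, emb_apply_rr]; rfl
  have hz : (∑ k : Fin n, M (Fin.castAdd n i) (Fin.castAdd n k)
      * blockDiagEmb A B (Fin.castAdd n k) (Fin.natAdd n j)) = 0 :=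
    Finset.sum_eq_zero (fun k _ => by rw [e1 k, mul_zero])
  rw [hz, zero_add]
  exact Finset.sum_congr rfl (fun k _ => by rw [e2 k])

lemma det_toSquareBlock_dual {ι : Type*} [Fintype ι] [DecidableEq ι]
    (M : Matrix ι ι F) (b : ι → Fin m) (μ : Fin m) :
    (M.toSquareBlock (OrderDual.toDual ∘ b) (OrderDual.toDual μ)).det
      = (M.toSquareBlock b μ).det := by
  let e : {i // (OrderDual.toDual ∘ b) i = OrderDual.toDual μ} ≃ {i // b i = μ} :=
    Equiv.subtypeEquivRight (fun i => by simp)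
  have h : M.toSquareBlock (OrderDual.toDual ∘ b) (OrderDual.toDual μ)
      = (M.toSquareBlock b μ).submatrix e e := by
    ext i j; rfl
  rw [h, Matrix.det_submatrix_equiv_self]

lemma det_eq_prod_blocks {p : Matrix (Fin (n+n)) (Fin (n+n)) F}
    (htri : ∀ i j, β i < β j → p i j = 0) :
    p.det = ∏ μ : Fin m, (p.toSquareBlock β μ).det := by
  have h : p.BlockTriangular (OrderDual.toDual ∘ β) := by
    intro i j hij
    exact htri i j hij
  rw [h.det_fintype]
  exact (Fintype.prod_equiv OrderDual.toDual _ _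
    (fun μ => (det_toSquareBlock_dual p β μ).symm)).symm

lemma det_topL_eq (hmono : Monotone β) {s : Fin m → ℕ}
    (hcard : ∀ μ, (Finset.univ.filter fun i => β i = μ).card = s μ) {pp : ℕ}
    (hsum : ∑ μ ∈ Finset.univ.filter (fun μ : Fin m => (μ : ℕ) < pp), s μ = n)
    {p : Matrix (Fin (n+n)) (Fin (n+n)) F}
    (htri : ∀ i j, β i < β j → p i j = 0) :
    (topL p).det = ∏ μ ∈ Finset.univ.filter (fun μ : Fin m => (μ : ℕ) < pp),
      (p.toSquareBlock β μ).det := by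
  have h : (topL p).BlockTriangular (OrderDual.toDual ∘ (fun i : Fin n => β (Fin.castAdd n i))) := by
    intro i j hij
    apply htri
    exact hij
  rw [h.det_fintype]
  rw [show (∏ k : (Fin m)ᵒᵈ, ((topL p).toSquareBlock
      (OrderDual.toDual ∘ (fun i : Fin n => β (Fin.castAdd n i))) k).det)
      = ∏ μ : Fin m, ((topL p).toSquareBlock (fun i : Fin n => β (Fin.castAdd n i)) μ).det from
    (Fintype.prod_equiv OrderDual.toDual _ _
      (fun μ => (det_toSquareBlock_dual (topL p) (fun i : Fin n => β (Fin.castAdd n i)) μ).symm)).symm]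
  rw [← Finset.prod_filter_mul_prod_filter_not Finset.univ (fun μ : Fin m => (μ : ℕ) < pp)]
  have h2 : ∀ μ ∈ Finset.univ.filter (fun μ : Fin m => ¬ (μ : ℕ) < pp),
      ((topL p).toSquareBlock (fun i : Fin n => β (Fin.castAdd n i)) μ).det = 1 := by
    intro μ hμ
    simp only [Finset.mem_filter, Finset.mem_univ, true_and] at hμ
    have : IsEmpty {i : Fin n // β (Fin.castAdd n i) = μ} := by
      constructor
      rintro ⟨i, hi⟩
      apply hμ
      rw [← hi]
      exact (halves hmono hcard hsum _).mpr (by simp [Fin.castAdd])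
    exact Matrix.det_isEmpty
  rw [Finset.prod_congr rfl h2, Finset.prod_const_one, mul_one]
  apply Finset.prod_congr rfl
  intro μ hμ
  simp only [Finset.mem_filter, Finset.mem_univ, true_and] at hμ
  have key : ∀ i : Fin (n+n), β i = μ → (i : ℕ) < n := by
    intro i hi
    exact (halves hmono hcard hsum i).mp (by rw [hi]; exact hμ)
  let e : {i : Fin n // β (Fin.castAdd n i) = μ} ≃ {i : Fin (n+n) // β i = μ} :=
    { toFun := fun i => ⟨Fin.castAdd n i.1, i.2⟩
      invFun := fun i => ⟨⟨(i.1 : ℕ), key i.1 i.2⟩, by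
        have h3 : Fin.castAdd n (⟨(i.1 : ℕ), key i.1 i.2⟩ : Fin n) = i.1 := Fin.ext rfl
        rw [h3]; exact i.2⟩
      left_inv := fun i => Subtype.ext (Fin.ext rfl)
      right_inv := fun i => Subtype.ext (Fin.ext rfl) }
  have h4 : (p.toSquareBlock β μ).submatrix e e
      = (topL p).toSquareBlock (fun i : Fin n => β (Fin.castAdd n i)) μ := rfl
  rw [← h4, Matrix.det_submatrix_equiv_self]

lemma char_prod {p : Matrix (Fin (n+n)) (Fin (n+n)) F}
    (htri : ∀ i j, β i < β j → p i j = 0) (hdet : IsUnit p.det)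
    (hmono : Monotone β) {s : Fin m → ℕ}
    (hcard : ∀ μ, (Finset.univ.filter fun i => β i = μ).card = s μ) {pp : ℕ}
    (hsum : ∑ μ ∈ Finset.univ.filter (fun μ : Fin m => (μ : ℕ) < pp), s μ = n)
    (a : Fin m → ℤ) :
    (∏ μ : Fin m, (p.toSquareBlock β μ).det ^ (a μ + if (μ : ℕ) < pp then 1 else 0))
      = (∏ μ : Fin m, (p.toSquareBlock β μ).det ^ a μ) * (topL p).det := by
  have hne : ∀ μ : Fin m, (p.toSquareBlock β μ).det ≠ 0 := by
    have : p.det ≠ 0 := hdet.ne_zero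
    rw [det_eq_prod_blocks htri] at this
    intro μ
    exact Finset.prod_ne_zero_iff.mp this μ (Finset.mem_univ μ)
  have h1 : ∀ μ : Fin m, (p.toSquareBlock β μ).det ^ (a μ + if (μ : ℕ) < pp then 1 else 0)
      = (p.toSquareBlock β μ).det ^ a μ * (if (μ : ℕ) < pp then (p.toSquareBlock β μ).det else 1) := by
    intro μ
    rw [zpow_add₀ (hne μ)]
    congr 1
    by_cases h : (μ : ℕ) < pp <;> simp [h]
  rw [Finset.prod_congr rfl (fun μ _ => h1 μ), Finset.prod_mul_distrib]
  congr 1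
  rw [det_topL_eq hmono hcard hsum htri, Finset.prod_filter]

end Tri

section LU


variable {F : Type*} [Field F]

def Lower {k : ℕ} (M : Matrix (Fin k) (Fin k) F) : Prop := ∀ i j, i < j → M i j = 0
def Upper {k : ℕ} (M : Matrix (Fin k) (Fin k) F) : Prop := ∀ i j, j < i → M i j = 0

lemma lower_mul_lower {k : ℕ} {L L' : Matrix (Fin k) (Fin k) F}
    (hL : Lower L) (hL' : Lower L') : Lower (L * L') := by
  intro i j hij
  rw [Matrix.mul_apply]
  apply Finset.sum_eq_zero
  intro t _
  by_cases ht : i < t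
  · rw [hL i t ht, zero_mul]
  · rw [hL' t j (lt_of_le_of_lt (le_of_not_gt ht) hij), mul_zero]

lemma lower_submatrix_mul {k k' : ℕ} (h : k' ≤ k) {L P : Matrix (Fin k) (Fin k) F}
    (hL : Lower L) :
    (L * P).submatrix (Fin.castLE h) (Fin.castLE h)
      = L.submatrix (Fin.castLE h) (Fin.castLE h) * P.submatrix (Fin.castLE h) (Fin.castLE h) := by
  ext a b
  simp only [Matrix.submatrix_apply, Matrix.mul_apply]
  have h1 : (∑ t ∈ Finset.univ.map (Fin.castLEEmb h),
        L (Fin.castLE h a) t * P t (Fin.castLE h b))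
      = ∑ t : Fin k', L (Fin.castLE h a) (Fin.castLE h t) * P (Fin.castLE h t) (Fin.castLE h b) := by
    rw [Finset.sum_map]
    apply Finset.sum_congr rfl
    intro t _
    rfl
  rw [← h1]
  apply (Finset.sum_subset (Finset.subset_univ _) _).symm
  intro t _ ht
  have htv : ¬ ((t : ℕ) < k') := by
    intro hlt
    apply ht
    simp only [Finset.mem_map, Finset.mem_univ, true_and]
    exact ⟨⟨(t : ℕ), hlt⟩, Fin.ext rfl⟩
  rw [hL _ _ (by rw [Fin.lt_def]; simp only [Fin.coe_castLE]; omega), zero_mul]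

lemma lu_exists : ∀ (k : ℕ) (M : Matrix (Fin k) (Fin k) F),
    (∀ (j : ℕ) (hj : j ≤ k), ((M.submatrix (Fin.castLE hj) (Fin.castLE hj)).det ≠ 0)) →
    ∃ L U : Matrix (Fin k) (Fin k) F, Lower L ∧ Upper U ∧ M = L * U := by
  intro k
  induction k with
  | zero =>
    intro M _
    exact ⟨1, 1, (fun i => i.elim0), (fun i => i.elim0), Subsingleton.elim _ _⟩
  | succ k IH =>
    intro M H
    have hα : M 0 0 ≠ 0 := by
      have h1 := H 1 (Nat.succ_le_succ (Nat.zero_le k))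
      rwa [Matrix.det_fin_one] at h1
    set L₁ : Matrix (Fin (k+1)) (Fin (k+1)) F :=
      Matrix.of (fun i j => if j = 0 then M i 0 * (M 0 0)⁻¹ else if i = j then 1 else 0) with hL₁def
    set P : Matrix (Fin (k+1)) (Fin (k+1)) F :=
      Matrix.of (fun i j => if i = 0 then M 0 j else if j = 0 then 0
        else M i j - M i 0 * (M 0 0)⁻¹ * M 0 j) with hPdef
    have hL₁ : Lower L₁ := by
      intro i j hij
      have h1 : j ≠ 0 := by
        intro h; rw [h] at hij; exact Fin.not_lt_zero i hij
      have h2 : i ≠ j := ne_of_lt hij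
      simp [hL₁def, h1, h2]
    have hP0 : ∀ t : Fin (k+1), P t 0 = if t = 0 then M 0 0 else 0 := by
      intro t
      by_cases h : t = 0 <;> simp [hPdef, h]
    have hMLP : M = L₁ * P := by
      ext i j
      rw [Matrix.mul_apply, Fin.sum_univ_succ]
      induction i using Fin.cases with
      | zero =>
        have hz : ∀ t : Fin k, L₁ (0 : Fin (k+1)) t.succ * P t.succ j = 0 := by
          intro t
          have : (0 : Fin (k+1)) ≠ t.succ := (Fin.succ_ne_zero t).symm
          simp [hL₁def, (Fin.succ_ne_zero t), this]
        rw [Finset.sum_eq_zero (fun t _ => hz t), add_zero]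
        simp [hL₁def, hPdef]
        field_simp
      | succ i' =>
        have hterm : ∀ t : Fin k, L₁ i'.succ t.succ * P t.succ j
            = if t = i' then P i'.succ j else 0 := by
          intro t
          by_cases h : t = i'
          · subst h; simp [hL₁def, Fin.succ_ne_zero]
          · have : i'.succ ≠ t.succ := by
              intro hc; exact h (Fin.succ_injective _ hc).symm
            simp [hL₁def, Fin.succ_ne_zero, this, h]
        rw [Finset.sum_congr rfl (fun t _ => hterm t), Finset.sum_ite_eq' Finset.univ i'
          (fun _ => P i'.succ j)]
        simp only [Finset.mem_univ, if_true]
        induction j using Fin.cases with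
        | zero =>
          have h5 : L₁ i'.succ 0 * P 0 0 = M i'.succ 0 := by
            simp [hL₁def, hPdef]
            field_simp
          rw [h5]
          simp [hPdef, Fin.succ_ne_zero]
        | succ j' =>
          simp [hL₁def, hPdef, Fin.succ_ne_zero]
          try ring
    set N : Matrix (Fin k) (Fin k) F := Matrix.of (fun i j => P i.succ j.succ) with hNdef
    have HN : ∀ (j : ℕ) (hj : j ≤ k), ((N.submatrix (Fin.castLE hj) (Fin.castLE hj)).det ≠ 0) := by
      intro j hj
      have hj1 : j + 1 ≤ k + 1 := Nat.succ_le_succ hj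
      have hd := H (j+1) hj1
      rw [hMLP, lower_submatrix_mul hj1 hL₁, Matrix.det_mul] at hd
      have hdP : ((P.submatrix (Fin.castLE hj1) (Fin.castLE hj1)).det) ≠ 0 :=
        fun h => hd (by rw [h, mul_zero])
      set Q := P.submatrix (Fin.castLE hj1) (Fin.castLE hj1) with hQdef
      have hQ0 : ∀ t : Fin (j+1), Q t 0 = if t = 0 then M 0 0 else 0 := by
        intro t
        rw [hQdef]
        simp only [Matrix.submatrix_apply]
        rw [show Fin.castLE hj1 (0 : Fin (j+1)) = 0 from rfl, hP0]
        by_cases h : t = 0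
        · subst h
          simp
        · have hc : Fin.castLE hj1 t ≠ 0 := by
            intro hc
            exact h (Fin.ext (by simpa using congrArg Fin.val hc))
          rw [if_neg hc, if_neg h]
      have hdet : Q.det = M 0 0 * ((N.submatrix (Fin.castLE hj) (Fin.castLE hj)).det) := by
        rw [Matrix.det_succ_column_zero, Finset.sum_eq_single 0]
        · have hsub : (Q.submatrix (Fin.succAbove 0) Fin.succ)
              = N.submatrix (Fin.castLE hj) (Fin.castLE hj) := by
            ext a b
            simp only [Matrix.submatrix_apply, Fin.zero_succAbove]
            rw [hQdef]
            simp only [Matrix.submatrix_apply]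
            rw [show Fin.castLE hj1 (a.succ) = (Fin.castLE hj a).succ from Fin.ext rfl,
                show Fin.castLE hj1 (b.succ) = (Fin.castLE hj b).succ from Fin.ext rfl]
            rfl
          rw [hQ0, hsub]
          simp
        · intro t _ ht
          rw [hQ0, if_neg ht, mul_zero, zero_mul]
        · intro h
          exact absurd (Finset.mem_univ _) h
      rw [hdet] at hdP
      intro h
      exact hdP (by rw [h, mul_zero])
    obtain ⟨L', U', hL', hU', hN'⟩ := IH N HN
    set DL : Matrix (Fin (k+1)) (Fin (k+1)) F :=
      Matrix.of (fun i j => Fin.cases (Fin.cases (1:F) (fun _ => 0) j)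
        (fun i' => Fin.cases 0 (fun j' => L' i' j') j) i) with hDLdef
    set UF : Matrix (Fin (k+1)) (Fin (k+1)) F :=
      Matrix.of (fun i j => Fin.cases (M 0 j)
        (fun i' => Fin.cases 0 (fun j' => U' i' j') j) i) with hUFdef
    have hPDU : P = DL * UF := by
      ext i j
      rw [Matrix.mul_apply, Fin.sum_univ_succ]
      induction i using Fin.cases with
      | zero =>
        have hz : ∀ t : Fin k, DL (0 : Fin (k+1)) t.succ * UF t.succ j = 0 := by
          intro t; simp [hDLdef]
        rw [Finset.sum_eq_zero (fun t _ => hz t), add_zero]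
        simp [hDLdef, hUFdef, hPdef]
      | succ i' =>
        have h0 : DL i'.succ 0 * UF 0 j = 0 := by simp [hDLdef]
        rw [h0, zero_add]
        induction j using Fin.cases with
        | zero =>
          have hz : ∀ t : Fin k, DL i'.succ t.succ * UF t.succ 0 = 0 := by
            intro t; simp [hUFdef]
          rw [Finset.sum_eq_zero (fun t _ => hz t)]
          simp [hPdef, Fin.succ_ne_zero]
        | succ j' =>
          have hterm : ∀ t : Fin k, DL i'.succ t.succ * UF t.succ j'.succ
              = L' i' t * U' t j' := by
            intro t; simp [hDLdef, hUFdef]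
          rw [Finset.sum_congr rfl (fun t _ => hterm t)]
          have : P i'.succ j'.succ = N i' j' := rfl
          rw [this, hN', Matrix.mul_apply]
    refine ⟨L₁ * DL, UF, ?_, ?_, ?_⟩
    · apply lower_mul_lower hL₁
      intro i j hij
      induction i using Fin.cases with
      | zero =>
        induction j using Fin.cases with
        | zero => exact absurd hij (lt_irrefl _)
        | succ j' => simp [hDLdef]
      | succ i' =>
        induction j using Fin.cases with
        | zero => exact absurd hij (by simp [Fin.lt_def])
        | succ j' =>
          have : i' < j' := by
            rw [Fin.lt_def] at hij ⊢
            simpa using hij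
          simp [hDLdef, hL' i' j' this]
    · intro i j hij
      induction i using Fin.cases with
      | zero => exact absurd hij (by simp [Fin.lt_def])
      | succ i' =>
        induction j using Fin.cases with
        | zero => simp [hUFdef]
        | succ j' =>
          have : j' < i' := by
            rw [Fin.lt_def] at hij ⊢
            simpa using hij
          simp [hUFdef, hU' i' j' this]
    · rw [hMLP, hPDU, mul_assoc]


end LU

section W0

variable {F : Type*} [Field F] {n : ℕ}

def w0 (F : Type*) [CommRing F] (n : ℕ) : Matrix (Fin n) (Fin n) F :=
  Matrix.of fun i j => if j = i.rev then 1 else 0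

lemma mul_w0 (M : Matrix (Fin n) (Fin n) F) (i j : Fin n) : (M * w0 F n) i j = M i j.rev := by
  rw [Matrix.mul_apply]
  have : ∀ k : Fin n, M i k * w0 F n k j = if k = j.rev then M i j.rev else 0 := by
    intro k
    by_cases h : k = j.rev
    · subst h
      simp [w0, Fin.rev_rev]
    · have : ¬ (j = k.rev) := by
        intro hc; exact h (by rw [hc, Fin.rev_rev])
      simp [w0, this, h]
  rw [Finset.sum_congr rfl (fun k _ => this k), Finset.sum_ite_eq' Finset.univ j.rev]
  simp

lemma w0_mul (M : Matrix (Fin n) (Fin n) F) (i j : Fin n) : (w0 F n * M) i j = M i.rev j := by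
  rw [Matrix.mul_apply]
  have : ∀ k : Fin n, w0 F n i k * M k j = if k = i.rev then M i.rev j else 0 := by
    intro k
    by_cases h : k = i.rev
    · subst h; simp [w0]
    · simp [w0, h]
  rw [Finset.sum_congr rfl (fun k _ => this k), Finset.sum_ite_eq' Finset.univ i.rev]
  simp

lemma w0_w0 : (w0 F n) * (w0 F n) = 1 := by
  ext i j
  rw [mul_w0]
  by_cases h : i = j
  · subst h; simp [w0, Fin.rev_rev]
  · have h2 : ¬ (j.rev = i.rev) := fun hc => h (Fin.rev_injective hc).symm
    simp [w0, Matrix.one_apply, h, h2]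

lemma w0_det_isUnit : IsUnit ((w0 F n).det) := by
  have h : (w0 F n).det * (w0 F n).det = 1 := by
    rw [← Matrix.det_mul, w0_w0, Matrix.det_one]
  exact isUnit_iff_exists_inv.mpr ⟨_, h⟩

lemma upper_conj {U : Matrix (Fin n) (Fin n) F} (hU : Upper U) :
    Lower ((w0 F n) * U * (w0 F n)) := by
  intro i j hij
  rw [mul_w0, w0_mul]
  exact hU _ _ (by rwa [Fin.rev_lt_rev])

lemma upper_inv {U : Matrix (Fin n) (Fin n) F} (hU : Upper U) (h : IsUnit U.det) :
    Upper (U⁻¹) := by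
  have : Invertible U := U.invertibleOfIsUnitDet h
  have hbt : U.BlockTriangular id := fun i j hij => hU i j hij
  exact fun i j hij => Matrix.blockTriangular_inv_of_blockTriangular hbt hij

end W0

section Factor

variable {F : Type*} [Field F] {m n : ℕ} {β : Fin (n + n) → Fin m}

/-- The base point x₀ = [[1,1],[w₀,0]]. -/
def x0F (F : Type*) [Field F] (n : ℕ) : Matrix (Fin (n+n)) (Fin (n+n)) F :=
  emb (fromBlocks 1 1 (w0 F n) 0)

/-- The Schur-type matrix C(x). -/
noncomputable def Cmat (x : Matrix (Fin (n+n)) (Fin (n+n)) F) : Matrix (Fin n) (Fin n) F :=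
  botL x * (topL x)⁻¹ - botR x * (topR x)⁻¹

lemma factor (hmono : Monotone β) {s : Fin m → ℕ}
    (hcard : ∀ μ, (Finset.univ.filter fun i => β i = μ).card = s μ) {pp : ℕ}
    (hsum : ∑ μ ∈ Finset.univ.filter (fun μ : Fin m => (μ : ℕ) < pp), s μ = n)
    (x : Matrix (Fin (n+n)) (Fin (n+n)) F)
    (h11 : (topL x).det ≠ 0) (h12 : (topR x).det ≠ 0)
    (hC : ∀ (j : ℕ) (hj : j ≤ n),
      (((Cmat x * w0 F n).submatrix (Fin.castLE hj) (Fin.castLE hj)).det ≠ 0)) :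
    ∃ (p : Matrix (Fin (n+n)) (Fin (n+n)) F) (A B : Matrix (Fin n) (Fin n) F),
      IsUnit p.det ∧ (∀ i j, β i < β j → p i j = 0) ∧ IsUnit A.det ∧ IsUnit B.det ∧
      x = p * x0F F n * blockDiagEmb A B := by
  obtain ⟨L, U, hL, hU, hLU⟩ := lu_exists n (Cmat x * w0 F n) hC
  have hfull : (Cmat x * w0 F n).det ≠ 0 := by
    have h := hC n (le_refl n)
    have heq : (Cmat x * w0 F n).submatrix (Fin.castLE (le_refl n)) (Fin.castLE (le_refl n))
        = Cmat x * w0 F n := by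
      ext a b
      rw [Matrix.submatrix_apply, show Fin.castLE (le_refl n) a = a from Fin.ext rfl,
        show Fin.castLE (le_refl n) b = b from Fin.ext rfl]
    rwa [heq] at h
  have hdetL : IsUnit L.det := by
    rw [hLU, Matrix.det_mul] at hfull
    exact isUnit_iff_ne_zero.mpr (left_ne_zero_of_mul hfull)
  have hdetU : IsUnit U.det := by
    rw [hLU, Matrix.det_mul] at hfull
    exact isUnit_iff_ne_zero.mpr (right_ne_zero_of_mul hfull)
  set p1 : Matrix (Fin n) (Fin n) F := w0 F n * U⁻¹ * w0 F n with hp1def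
  have hp1lower : Lower p1 := upper_conj (upper_inv hU hdetU)
  have hdetp1 : IsUnit p1.det := by
    rw [hp1def, Matrix.det_mul, Matrix.det_mul]
    exact (w0_det_isUnit.mul (U.isUnit_nonsing_inv_det hdetU)).mul w0_det_isUnit
  have key : Cmat x * p1 = L * w0 F n := by
    rw [hp1def,
      show Cmat x * (w0 F n * U⁻¹ * w0 F n) = ((Cmat x * w0 F n) * U⁻¹) * w0 F n by
        noncomm_ring,
      hLU, Matrix.mul_assoc L U U⁻¹, Matrix.mul_nonsing_inv U hdetU, Matrix.mul_one]
  set A : Matrix (Fin n) (Fin n) F := p1⁻¹ * topL x with hAdef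
  set B : Matrix (Fin n) (Fin n) F := p1⁻¹ * topR x with hBdef
  have hdetA : IsUnit A.det := by
    rw [hAdef, Matrix.det_mul]
    exact (p1.isUnit_nonsing_inv_det hdetp1).mul (isUnit_iff_ne_zero.mpr h11)
  have hdetB : IsUnit B.det := by
    rw [hBdef, Matrix.det_mul]
    exact (p1.isUnit_nonsing_inv_det hdetp1).mul (isUnit_iff_ne_zero.mpr h12)
  set q : Matrix (Fin n) (Fin n) F := botR x * B⁻¹ with hqdef
  refine ⟨emb (fromBlocks p1 0 q L), A, B, ?_, ?_, hdetA, hdetB, ?_⟩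
  · rw [show (emb (fromBlocks p1 0 q L)).det = (fromBlocks p1 0 q L).det from
      Matrix.det_submatrix_equiv_self _ _, Matrix.det_fromBlocks_zero₁₂]
    exact hdetp1.mul hdetL
  · intro i j hij
    obtain ⟨ki, rfl⟩ := finSumFinEquiv.surjective i
    obtain ⟨kj, rfl⟩ := finSumFinEquiv.surjective j
    cases ki with
    | inl a =>
      cases kj with
      | inl b =>
        rw [finSumFinEquiv_apply_left, finSumFinEquiv_apply_left] at hij ⊢
        rw [emb_apply_ll]
        apply hp1lower
        by_contra hab
        have hba := le_of_not_gt hab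
        rw [Fin.le_def] at hba
        have : Fin.castAdd n b ≤ Fin.castAdd n a := by
          rw [Fin.le_def]
          exact hba
        exact absurd (hmono this) (not_le_of_gt hij)
      | inr b =>
        rw [finSumFinEquiv_apply_left, finSumFinEquiv_apply_right] at hij ⊢
        rw [emb_apply_lr]
        rfl
    | inr a =>
      cases kj with
      | inl b =>
        rw [finSumFinEquiv_apply_right, finSumFinEquiv_apply_left] at hij ⊢
        exfalso
        have ha : ¬ ((β (Fin.natAdd n a) : ℕ) < pp) := by
          rw [halves hmono hcard hsum]
          exact not_lt.mpr (Nat.le_add_right n a)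
        have hb : ((β (Fin.castAdd n b) : ℕ) < pp) :=
          (halves hmono hcard hsum _).mpr b.isLt
        rw [Fin.lt_def] at hij
        omega
      | inr b =>
        rw [finSumFinEquiv_apply_right, finSumFinEquiv_apply_right] at hij ⊢
        rw [emb_apply_rr]
        apply hL
        by_contra hab
        have hba := le_of_not_gt hab
        rw [Fin.le_def] at hba
        have : Fin.natAdd n b ≤ Fin.natAdd n a := by
          rw [Fin.le_def]
          exact Nat.add_le_add_left hba n
        exact absurd (hmono this) (not_le_of_gt hij)
  · have hp1A : p1 * A = topL x := by
      rw [hAdef, ← Matrix.mul_assoc, Matrix.mul_nonsing_inv p1 hdetp1, Matrix.one_mul]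
    have hp1B : p1 * B = topR x := by
      rw [hBdef, ← Matrix.mul_assoc, Matrix.mul_nonsing_inv p1 hdetp1, Matrix.one_mul]
    have hqB : q * B = botR x := by
      rw [hqdef, Matrix.mul_assoc, Matrix.nonsing_inv_mul B hdetB, Matrix.mul_one]
    have hq21 : (q + L * w0 F n) * A = botL x := by
      rw [← key, Matrix.add_mul]
      have hBinv : B⁻¹ = (topR x)⁻¹ * p1 := by
        rw [hBdef, Matrix.mul_inv_rev, Matrix.nonsing_inv_nonsing_inv p1 hdetp1]
      have hqA : q * A = botR x * (topR x)⁻¹ * topL x := by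
        rw [hqdef, hBinv, hAdef]
        calc botR x * ((topR x)⁻¹ * p1) * (p1⁻¹ * topL x)
            = botR x * (topR x)⁻¹ * (p1 * p1⁻¹) * topL x := by noncomm_ring
          _ = botR x * (topR x)⁻¹ * topL x := by
              rw [Matrix.mul_nonsing_inv p1 hdetp1, Matrix.mul_one]
      have hCA : (Cmat x * p1) * A = botL x - botR x * (topR x)⁻¹ * topL x := by
        rw [Matrix.mul_assoc, hp1A, Cmat, Matrix.sub_mul,
          Matrix.mul_assoc (botL x), Matrix.nonsing_inv_mul _ (isUnit_iff_ne_zero.mpr h11),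
          Matrix.mul_one]
      rw [hqA, hCA]
      abel
    have hblocks : fromBlocks p1 0 q L * fromBlocks (1 : Matrix (Fin n) (Fin n) F) 1
          (w0 F n) 0 * fromBlocks A 0 0 B
        = fromBlocks (topL x) (topR x) (botL x) (botR x) := by
      rw [Matrix.fromBlocks_multiply, Matrix.fromBlocks_multiply]
      rw [Matrix.fromBlocks_inj]
      refine ⟨?_, ?_, ?_, ?_⟩ <;>
        simp only [Matrix.mul_one, Matrix.mul_zero, Matrix.zero_mul, add_zero, zero_add]
      · exact hp1A
      · exact hp1B
      · exact hq21
      · exact hqB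
    rw [x0F, blockDiagEmb_eq, emb_mul, emb_mul, hblocks, emb_blocks]

end Factor

section Poly

variable {F : Type*} [Field F] {n : ℕ}

/-- blocks of an embedded block matrix -/
lemma topL_emb {R : Type*} [CommRing R] (a b c d : Matrix (Fin n) (Fin n) R) :
    topL (emb (fromBlocks a b c d)) = a := by
  ext i j
  rw [show topL (emb (fromBlocks a b c d)) i j
    = emb (fromBlocks a b c d) (Fin.castAdd n i) (Fin.castAdd n j) from rfl, emb_apply_ll]
  rfl

lemma topR_emb {R : Type*} [CommRing R] (a b c d : Matrix (Fin n) (Fin n) R) :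
    topR (emb (fromBlocks a b c d)) = b := by
  ext i j
  rw [show topR (emb (fromBlocks a b c d)) i j
    = emb (fromBlocks a b c d) (Fin.castAdd n i) (Fin.natAdd n j) from rfl, emb_apply_lr]
  rfl

lemma botL_emb {R : Type*} [CommRing R] (a b c d : Matrix (Fin n) (Fin n) R) :
    botL (emb (fromBlocks a b c d)) = c := by
  ext i j
  rw [show botL (emb (fromBlocks a b c d)) i j
    = emb (fromBlocks a b c d) (Fin.natAdd n i) (Fin.castAdd n j) from rfl, emb_apply_rl]
  rfl

lemma botR_emb {R : Type*} [CommRing R] (a b c d : Matrix (Fin n) (Fin n) R) :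
    botR (emb (fromBlocks a b c d)) = d := by
  ext i j
  rw [show botR (emb (fromBlocks a b c d)) i j
    = emb (fromBlocks a b c d) (Fin.natAdd n i) (Fin.natAdd n j) from rfl, emb_apply_rr]
  rfl

/-- The adjugate-cleared Schur complement matrix. -/
noncomputable def CmatAdj {R : Type*} [CommRing R] (y : Matrix (Fin (n+n)) (Fin (n+n)) R) :
    Matrix (Fin n) (Fin n) R :=
  (topR y).det • (botL y * (topL y).adjugate) - (topL y).det • (botR y * (topR y).adjugate)

/-- The generic matrix of variables. -/
noncomputable def XM (F : Type*) [Field F] (n : ℕ) :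
    Matrix (Fin (n+n)) (Fin (n+n)) (MvPolynomial (Fin (n+n) × Fin (n+n)) F) :=
  Matrix.of fun i j => MvPolynomial.X (i, j)

/-- The certificate polynomial E. -/
noncomputable def Epoly (F : Type*) [Field F] (n : ℕ) :
    MvPolynomial (Fin (n+n) × Fin (n+n)) F :=
  fPlusPoly F n n * fMinusPoly F n n *
    ∏ j : Fin (n+1),
      ((CmatAdj (XM F n) * w0 (MvPolynomial (Fin (n+n) × Fin (n+n)) F) n).submatrix
        (Fin.castLE (Fin.is_le j)) (Fin.castLE (Fin.is_le j))).det

section MapLemmas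

variable {R : Type*} [CommRing R] (f : R →+* F)

lemma map_matmul (A B : Matrix (Fin n) (Fin n) R) : (A * B).map f = A.map f * B.map f := by
  ext i j
  simp [Matrix.mul_apply, map_sum, _root_.map_mul]

lemma map_smulmat (c : R) (A : Matrix (Fin n) (Fin n) R) :
    (c • A).map f = f c • A.map f := by
  ext i j
  simp [Matrix.smul_apply, _root_.map_mul]

lemma map_submat (A : Matrix (Fin n) (Fin n) R) {k : ℕ} (h : k ≤ n) :
    (A.submatrix (Fin.castLE h) (Fin.castLE h)).map f
      = (A.map f).submatrix (Fin.castLE h) (Fin.castLE h) := rfl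

lemma map_w0mat : (w0 R n).map f = w0 F n := by
  ext i j
  simp [w0, Matrix.map_apply, apply_ite f]

lemma map_CmatAdj (M : Matrix (Fin (n+n)) (Fin (n+n)) R) :
    (CmatAdj M).map f = CmatAdj (M.map f) := by
  have hdet : ∀ N : Matrix (Fin n) (Fin n) R, f N.det = (N.map f).det := by
    intro N
    rw [RingHom.map_det]
    rfl
  have hadj : ∀ N : Matrix (Fin n) (Fin n) R, (N.adjugate).map f = (N.map f).adjugate := by
    intro N
    have := f.map_adjugate N
    rwa [RingHom.mapMatrix_apply, RingHom.mapMatrix_apply] at this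
  rw [CmatAdj, CmatAdj, Matrix.map_sub _ (map_sub f), map_smulmat, map_smulmat,
    map_matmul, map_matmul, hdet, hdet, hadj, hadj]
  rfl

end MapLemmas

/-- Evaluation of `Epoly`. -/
lemma matEval_Epoly (x : Matrix (Fin (n+n)) (Fin (n+n)) F) :
    matEval (Epoly F n) x = (topL x).det * (topR x).det *
      ∏ j : Fin (n+1),
        ((CmatAdj x * w0 F n).submatrix (Fin.castLE (Fin.is_le j))
          (Fin.castLE (Fin.is_le j))).det := by
  set T : MvPolynomial (Fin (n+n) × Fin (n+n)) F →+* F :=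
    (MvPolynomial.eval (fun q : Fin (n+n) × Fin (n+n) => x q.1 q.2)) with hT
  have hXM : (XM F n).map T = x := by
    ext i j
    simp [XM, hT]
  have hE : matEval (Epoly F n) x = T (Epoly F n) := rfl
  rw [hE, Epoly, _root_.map_mul, _root_.map_mul, map_prod]
  rw [show T (fPlusPoly F n n) = matEval (fPlusPoly F n n) x from rfl, matEval_fPlus]
  rw [show T (fMinusPoly F n n) = matEval (fMinusPoly F n n) x from rfl, matEval_fMinus]
  congr 1
  apply Finset.prod_congr rfl
  intro j _
  rw [RingHom.map_det, RingHom.mapMatrix_apply, map_submat, map_matmul, map_CmatAdj,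
    map_w0mat, hXM]

lemma one_submatrix_castLE {k : ℕ} (h : k ≤ n) :
    ((1 : Matrix (Fin n) (Fin n) F).submatrix (Fin.castLE h) (Fin.castLE h)) = 1 := by
  ext a b
  rw [Matrix.submatrix_apply]
  by_cases hab : a = b
  · subst hab; simp
  · have : Fin.castLE h a ≠ Fin.castLE h b := by
      intro hc
      exact hab (Fin.castLE_injective h hc)
    rw [Matrix.one_apply_ne this, Matrix.one_apply_ne hab]

lemma CmatAdj_x0F : CmatAdj (x0F F n) = w0 F n := by
  rw [x0F, CmatAdj, topL_emb, topR_emb, botL_emb, botR_emb]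
  simp [Matrix.adjugate_one]

lemma matEval_Epoly_x0F : matEval (Epoly F n) (x0F F n) = 1 := by
  rw [matEval_Epoly, CmatAdj_x0F, w0_w0, x0F, topL_emb, topR_emb, Matrix.det_one]
  rw [Finset.prod_congr rfl (fun j _ => by rw [one_submatrix_castLE, Matrix.det_one])]
  simp

lemma Epoly_ne : (Epoly F n) ≠ 0 := by
  intro h
  have := matEval_Epoly_x0F (F := F) (n := n)
  rw [h] at this
  simp [matEval] at this

/-- `CmatAdj` is the scalar-cleared version of `Cmat`. -/
lemma CmatAdj_smul (x : Matrix (Fin (n+n)) (Fin (n+n)) F)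
    (h11 : (topL x).det ≠ 0) (h12 : (topR x).det ≠ 0) :
    CmatAdj x = ((topL x).det * (topR x).det) • Cmat x := by
  have hadj : ∀ (N : Matrix (Fin n) (Fin n) F), N.det ≠ 0 → N.adjugate = N.det • N⁻¹ := by
    intro N hN
    rw [Matrix.inv_def, smul_smul, Ring.inverse_eq_inv', mul_inv_cancel₀ hN, one_smul]
  rw [CmatAdj, Cmat, hadj _ h11, hadj _ h12, smul_sub]
  congr 1
  · rw [Matrix.mul_smul, smul_smul, mul_comm ((topR x).det) ((topL x).det)]
  · rw [Matrix.mul_smul, smul_smul]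

/-- nonvanishing of E gives the hypotheses of `factor`. -/
lemma E_conditions (x : Matrix (Fin (n+n)) (Fin (n+n)) F)
    (hE : matEval (Epoly F n) x ≠ 0) :
    (topL x).det ≠ 0 ∧ (topR x).det ≠ 0 ∧
    (∀ (j : ℕ) (hj : j ≤ n),
      (((Cmat x * w0 F n).submatrix (Fin.castLE hj) (Fin.castLE hj)).det ≠ 0)) := by
  rw [matEval_Epoly] at hE
  have h11 : (topL x).det ≠ 0 := by
    intro h; rw [h] at hE; simp at hE
  have h12 : (topR x).det ≠ 0 := by
    intro h; rw [h] at hE; simp at hE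
  refine ⟨h11, h12, ?_⟩
  intro j hj
  have hprod : (∏ j : Fin (n+1),
      ((CmatAdj x * w0 F n).submatrix (Fin.castLE (Fin.is_le j))
        (Fin.castLE (Fin.is_le j))).det) ≠ 0 := by
    intro h; rw [h] at hE; simp at hE
  have hfac := Finset.prod_ne_zero_iff.mp hprod ⟨j, Nat.lt_succ_of_le hj⟩ (Finset.mem_univ _)
  have heq : (CmatAdj x * w0 F n) = ((topL x).det * (topR x).det) • (Cmat x * w0 F n) := by
    rw [CmatAdj_smul x h11 h12, Matrix.smul_mul]
  rw [heq] at hfac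
  have hsub : ((((topL x).det * (topR x).det) • (Cmat x * w0 F n)).submatrix
      (Fin.castLE (Fin.is_le (⟨j, Nat.lt_succ_of_le hj⟩ : Fin (n+1))))
      (Fin.castLE (Fin.is_le (⟨j, Nat.lt_succ_of_le hj⟩ : Fin (n+1)))))
      = ((topL x).det * (topR x).det) • ((Cmat x * w0 F n).submatrix
        (Fin.castLE hj) (Fin.castLE hj)) := by
    ext a b
    rfl
  rw [hsub, Matrix.det_smul] at hfac
  intro h
  rw [h, mul_zero] at hfac
  exact hfac rfl

end Poly

section Part1

variable {F : Type*} [Field F] {m n : ℕ} {β : Fin (n + n) → Fin m}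

lemma admis_mul_fMinus (hmono : Monotone β) {s : Fin m → ℕ}
    (hcard : ∀ μ, (Finset.univ.filter fun i => β i = μ).card = s μ) {pp : ℕ}
    (hsum : ∑ μ ∈ Finset.univ.filter (fun μ : Fin m => (μ : ℕ) < pp), s μ = n)
    (φ : MvPolynomial (Fin (n + n) × Fin (n + n)) F) (a : Fin m → ℤ) (kP kM : ℤ)
    (hφ : IsAdmissibleType β φ a kP kM) :
    IsAdmissibleType β (φ * fMinusPoly F n n)
      (fun μ => a μ + if (μ : ℕ) < pp then 1 else 0) kP (kM + 1) := by
  intro p hdet htri x A hA B hB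
  rw [matEval_mul, matEval_mul, matEval_fMinus, matEval_fMinus, hφ p hdet htri x A hA B hB]
  have htopR : topR (p * x * blockDiagEmb A B) = topL p * topR x * B := by
    rw [topR_mul_blockDiag, topR_mul_left hmono hcard hsum htri]
  rw [htopR, Matrix.det_mul, Matrix.det_mul, char_prod htri hdet hmono hcard hsum a,
    zpow_add_one₀ hB.ne_zero]
  ring

lemma admis_mul_fPlus (hmono : Monotone β) {s : Fin m → ℕ}
    (hcard : ∀ μ, (Finset.univ.filter fun i => β i = μ).card = s μ) {pp : ℕ}
    (hsum : ∑ μ ∈ Finset.univ.filter (fun μ : Fin m => (μ : ℕ) < pp), s μ = n)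
    (φ : MvPolynomial (Fin (n + n) × Fin (n + n)) F) (a : Fin m → ℤ) (kP kM : ℤ)
    (hφ : IsAdmissibleType β φ a kP kM) :
    IsAdmissibleType β (φ * fPlusPoly F n n)
      (fun μ => a μ + if (μ : ℕ) < pp then 1 else 0) (kP + 1) kM := by
  intro p hdet htri x A hA B hB
  rw [matEval_mul, matEval_mul, matEval_fPlus, matEval_fPlus, hφ p hdet htri x A hA B hB]
  have htopL : topL (p * x * blockDiagEmb A B) = topL p * topL x * A := by
    rw [topL_mul_blockDiag, topL_mul_left hmono hcard hsum htri]
  rw [htopL, Matrix.det_mul, Matrix.det_mul, char_prod htri hdet hmono hcard hsum a,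
    zpow_add_one₀ hA.ne_zero]
  ring

lemma eval_zero_of [Infinite F] (D : MvPolynomial (Fin (n + n) × Fin (n + n)) F)
    (h : ∀ x : Matrix (Fin (n+n)) (Fin (n+n)) F, matEval D x = 0) : D = 0 := by
  apply MvPolynomial.funext
  intro v
  rw [map_zero]
  exact h (Matrix.of fun i j => v (i, j))

lemma matEval_sub (f g : MvPolynomial (Fin (n + n) × Fin (n + n)) F)
    (x : Matrix (Fin (n+n)) (Fin (n+n)) F) :
    matEval (f - g) x = matEval f x - matEval g x := map_sub _ _ _

lemma matEval_smul (c : F) (f : MvPolynomial (Fin (n + n) × Fin (n + n)) F)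
    (x : Matrix (Fin (n+n)) (Fin (n+n)) F) : matEval (c • f) x = c * matEval f x := by
  rw [matEval, MvPolynomial.smul_eq_C_mul, _root_.map_mul, MvPolynomial.eval_C]
  rfl

end Part1

end PhiAux


open PhiAux in
/-- §3.2, Case ε(M′)=1: d even with d⁺(M) = d⁻(M) = d/2 = n, d⁺(M′) = d⁻(M′)+1.
If φ⁺, φ⁻ are (nonzero) polynomials of admissibility types
{(a_μ),(d⁺(M′),d⁻(M′))} and {(a_μ),(d⁻(M′),d⁺(M′))} (same exponents a⁺ = a⁻),
then φ⁺·f⁻ and φ⁻·f⁺ have the same admissibility type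
{(a_μ + 1_{μ≤𝔭}),(d⁺(M′),d⁺(M′))}, and consequently, by the uniqueness of
polynomials of a given admissibility type, φ⁺·f⁻ = c · φ⁻·f⁺ for a nonzero
scalar c. -/
theorem phi_f_relation
    {F : Type*} [Field F] [Infinite F] {m n : ℕ}
    (s : Fin m → ℕ) (β : Fin (n + n) → Fin m)
    (hmono : Monotone β)
    (hcard : ∀ μ, (Finset.univ.filter fun i => β i = μ).card = s μ)
    (pp : ℕ)
    (hsum : ∑ μ ∈ Finset.univ.filter (fun μ : Fin m => (μ : ℕ) < pp), s μ = n)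
    (dP' dM' : ℕ) (hε : dP' = dM' + 1)
    (φP φM : MvPolynomial (Fin (n + n) × Fin (n + n)) F)
    (a : Fin m → ℤ)
    (hφP : IsAdmissibleType β φP a (dP' : ℤ) (dM' : ℤ))
    (hφM : IsAdmissibleType β φM a (dM' : ℤ) (dP' : ℤ))
    (hφP0 : φP ≠ 0) (hφM0 : φM ≠ 0) :
    (IsAdmissibleType β (φP * fMinusPoly F n n)
        (fun μ => a μ + if (μ : ℕ) < pp then 1 else 0) (dP' : ℤ) (dP' : ℤ) ∧
      IsAdmissibleType β (φM * fPlusPoly F n n)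
        (fun μ => a μ + if (μ : ℕ) < pp then 1 else 0) (dP' : ℤ) (dP' : ℤ)) ∧
    ∃ c : F, c ≠ 0 ∧ φP * fMinusPoly F n n = c • (φM * fPlusPoly F n n) := by
  have hcast : (dP' : ℤ) = (dM' : ℤ) + 1 := by exact_mod_cast hε
  constructor
  · constructor
    · have h := admis_mul_fMinus hmono hcard hsum φP a (dP' : ℤ) (dM' : ℤ) hφP
      rwa [← hcast] at h
    · have h := admis_mul_fPlus hmono hcard hsum φM a (dM' : ℤ) (dP' : ℤ) hφM
      rwa [← hcast] at h
  · set φP0 := matEval φP (x0F F n) with hφP0def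
    set φM0 := matEval φM (x0F F n) with hφM0def
    have main : ∀ x : Matrix (Fin (n+n)) (Fin (n+n)) F, matEval (Epoly F n) x ≠ 0 →
        ∃ K dp1 dA dB : F, dA ≠ 0 ∧ dB ≠ 0 ∧
          matEval φP x = K * φP0 * dA ^ (dP' : ℤ) * dB ^ (dM' : ℤ) ∧
          matEval φM x = K * φM0 * dA ^ (dM' : ℤ) * dB ^ (dP' : ℤ) ∧
          (topL x).det = dp1 * dA ∧ (topR x).det = dp1 * dB := by
      intro x hEx
      obtain ⟨h11, h12, hC⟩ := E_conditions x hEx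
      obtain ⟨p, A, B, hdetp, htri, hA, hB, hxfact⟩ := factor hmono hcard hsum x h11 h12 hC
      refine ⟨∏ μ : Fin m, (p.toSquareBlock β μ).det ^ a μ, (topL p).det, A.det, B.det,
        hA.ne_zero, hB.ne_zero, ?_, ?_, ?_, ?_⟩
      · rw [hxfact]; exact hφP p hdetp htri (x0F F n) A hA B hB
      · rw [hxfact]; exact hφM p hdetp htri (x0F F n) A hA B hB
      · rw [hxfact, topL_mul_blockDiag, topL_mul_left hmono hcard hsum htri, x0F, topL_emb,
          Matrix.mul_one, Matrix.det_mul]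
      · rw [hxfact, topR_mul_blockDiag, topR_mul_left hmono hcard hsum htri, x0F, topR_emb,
          Matrix.mul_one, Matrix.det_mul]
    have hφM0ne : φM0 ≠ 0 := by
      intro h0
      have hzero : φM * Epoly F n = 0 := by
        apply eval_zero_of
        intro x
        rw [matEval_mul]
        by_cases hEx : matEval (Epoly F n) x = 0
        · rw [hEx, mul_zero]
        · obtain ⟨K, dp1, dA, dB, _, _, _, hM, _, _⟩ := main x hEx
          rw [hM, h0]
          ring
      rcases mul_eq_zero.mp hzero with h | h
      · exact hφM0 h
      · exact Epoly_ne h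
    have hφP0ne : φP0 ≠ 0 := by
      intro h0
      have hzero : φP * Epoly F n = 0 := by
        apply eval_zero_of
        intro x
        rw [matEval_mul]
        by_cases hEx : matEval (Epoly F n) x = 0
        · rw [hEx, mul_zero]
        · obtain ⟨K, dp1, dA, dB, _, _, hP, _, _, _⟩ := main x hEx
          rw [hP, h0]
          ring
      rcases mul_eq_zero.mp hzero with h | h
      · exact hφP0 h
      · exact Epoly_ne h
    have hD : φM0 • (φP * fMinusPoly F n n) = φP0 • (φM * fPlusPoly F n n) := by
      have hDE : (φM0 • (φP * fMinusPoly F n n) - φP0 • (φM * fPlusPoly F n n))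
          * Epoly F n = 0 := by
        apply eval_zero_of
        intro x
        rw [matEval_mul]
        by_cases hEx : matEval (Epoly F n) x = 0
        · rw [hEx, mul_zero]
        · rw [matEval_sub, matEval_smul, matEval_smul, matEval_mul, matEval_mul,
            matEval_fPlus, matEval_fMinus]
          obtain ⟨K, dp1, dA, dB, hdA, hdB, hP, hM, hTL, hTR⟩ := main x hEx
          rw [hP, hM, hTL, hTR, hcast, zpow_add_one₀ hdA, zpow_add_one₀ hdB]
          ring
      rcases mul_eq_zero.mp hDE with h | h
      · exact sub_eq_zero.mp h
      · exact absurd h Epoly_ne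
    refine ⟨φM0⁻¹ * φP0, mul_ne_zero (inv_ne_zero hφM0ne) hφP0ne, ?_⟩
    have h2 := congrArg (fun z => φM0⁻¹ • z) hD
    rwa [smul_smul, smul_smul, inv_mul_cancel₀ hφM0ne, one_smul] at h2
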